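/- Let μ be a finite measure, 𝒟 a dyadic lattice, and b ∈ L²(μ) such that the Carleson condition Σ_{Q ⊂ R} ‖Δ_Q b‖²_{L²(μ)} ≤ A·μ(R) holds for every dyadic cube R (sum over a fixed subfamily 𝒢 of dyadic cubes). Then the paraproduct π_b f := Σ_{Q ∈ 𝒢} ⟨f⟩_{F^{(r-1)}(Q), μ} Δ_Q b, where F^{(r-1)}(Q) is the (r−1)-fold dyadic ancestor of Q, is bounded on L²(μ): ‖π_b f‖_{L²(μ)} ≤ C√A ‖f‖_{L²(μ)}. -/

import Mathlib

open MeasureTheory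

private lemma l2_mul_integrable {α : Type*} [MeasurableSpace α] {μ : Measure α}
    {a b : α → ℝ} (ha : MemLp a 2 μ) (hb : MemLp b 2 μ) :
    Integrable (fun x => a x * b x) μ := by
  refine Integrable.mono' ((ha.integrable_sq.add hb.integrable_sq).div_const 2)
    (ha.aestronglyMeasurable.mul hb.aestronglyMeasurable) ?_
  filter_upwards with x
  have h := sq_nonneg (|a x| - |b x|)
  have h1 : ‖a x * b x‖ = |a x| * |b x| := by rw [Real.norm_eq_abs, abs_mul]
  have h2 : |a x| ^ 2 = a x ^ 2 := sq_abs _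
  have h3 : |b x| ^ 2 = b x ^ 2 := sq_abs _
  rw [h1]
  simp only [Pi.add_apply]
  nlinarith [abs_nonneg (a x), abs_nonneg (b x)]

private lemma tele_aux (φ : ℝ → ℝ) (hφ0 : φ 0 = 0) (n : ℕ) (t : ℕ → ℝ)
    (hmono : ∀ j, j < n → t j ≤ t (j + 1)) (ht0 : t 0 = 0)
    (x : ℝ) (hx : x = 0 ∨ ∃ k, 1 ≤ k ∧ k ≤ n ∧ t k = x) (hx0 : 0 ≤ x) :
    ∑ j ∈ Finset.range n, (if t (j + 1) ≤ x then φ (t (j + 1)) - φ (t j) else 0) = φ x := by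
  classical
  have hmono' : ∀ j, j ≤ n → ∀ i, i ≤ j → t i ≤ t j := by
    intro j
    induction j with
    | zero => intro _ i hi; interval_cases i; exact le_rfl
    | succ m ih =>
      intro hm i hi
      rcases Nat.eq_or_lt_of_le hi with rfl | hlt
      · exact le_rfl
      · exact le_trans (ih (by omega) i (by omega)) (hmono m (by omega))
  set P : ℕ → Prop := fun j => t j ≤ x with hP
  have hP0 : P 0 := by rw [hP]; simp [ht0, hx0]
  have key : ∀ m, m ≤ n →
      (∑ j ∈ Finset.range m, if t (j + 1) ≤ x then φ (t (j + 1)) - φ (t j) else 0)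
        = φ (t (Nat.findGreatest P m)) - φ (t 0) := by
    intro m
    induction m with
    | zero => intro _; simp
    | succ m ih =>
      intro hm
      rw [Finset.sum_range_succ, ih (by omega)]
      by_cases h : P (m + 1)
      · have htm : P m := le_trans (hmono m (by omega)) h
        rw [Nat.findGreatest_eq h, Nat.findGreatest_eq htm, if_pos h]
        ring
      · rw [Nat.findGreatest_succ, if_neg h, if_neg h, add_zero]
  rw [key n le_rfl]
  have hle : t (Nat.findGreatest P n) ≤ x := Nat.findGreatest_spec (Nat.zero_le n) hP0
  have hGle : Nat.findGreatest P n ≤ n := Nat.findGreatest_le n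
  have : t (Nat.findGreatest P n) = x := by
    rcases hx with rfl | ⟨k, hk1, hkn, hkx⟩
    · have : t 0 ≤ t (Nat.findGreatest P n) := hmono' _ hGle 0 (Nat.zero_le _)
      rw [ht0] at this; linarith
    · have hkG : k ≤ Nat.findGreatest P n := Nat.le_findGreatest hkn (le_of_eq hkx)
      have : t k ≤ t (Nat.findGreatest P n) := hmono' _ hGle k hkG
      rw [hkx] at this; linarith
  rw [this, ht0, hφ0, sub_zero]


open scoped Classical in
private lemma carleson_embed {α ι : Type*} [MeasurableSpace α]
    (μ : Measure α) [IsFiniteMeasure μ]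
    (T : ι → Set α) (hTm : ∀ Q, MeasurableSet (T Q))
    (hlat : ∀ Q R, T Q ⊆ T R ∨ T R ⊆ T Q ∨ Disjoint (T Q) (T R))
    (𝒢 : Finset ι) (A : ℝ) (hA : 0 ≤ A)
    (w : ι → ℝ) (hw : ∀ Q, 0 ≤ w Q)
    (hpack : ∀ Q₀ ∈ 𝒢, ∑ Q ∈ 𝒢.filter (fun Q => T Q ⊆ T Q₀), w Q ≤ A * (μ (T Q₀)).toReal)
    (g : α → ℝ) (hg0 : ∀ x, 0 ≤ g x) (hgi : Integrable g μ)
    (hg2 : Integrable (fun x => g x ^ 2) μ) :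
    ∑ Q ∈ 𝒢, w Q * ((∫ x in T Q, g x ∂μ) / (μ (T Q)).toReal) ^ 2
      ≤ 4 * A * ∫ x, g x ^ 2 ∂μ := by
  classical
  set lam : ι → ℝ := fun Q => (∫ x in T Q, g x ∂μ) / (μ (T Q)).toReal with hlamdef
  have hlam0 : ∀ Q, 0 ≤ lam Q := fun Q =>
    div_nonneg (setIntegral_nonneg (hTm Q) fun x _ => hg0 x) ENNReal.toReal_nonneg
  set vals : List ℝ := ((𝒢.image lam).filter (fun v => 0 < v)).sort (· ≤ ·) with hvals
  set n : ℕ := vals.length with hn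
  set t : ℕ → ℝ := fun j => (0 :: vals).getD j 0 with htdef
  have hvpos : ∀ v ∈ vals, 0 < v := by
    intro v hv
    rw [hvals, Finset.mem_sort] at hv
    exact (Finset.mem_filter.mp hv).2
  have hsort : (0 :: vals).Pairwise (· ≤ ·) :=
    List.pairwise_cons.mpr ⟨fun b hb => (hvpos b hb).le, Finset.pairwise_sort _ _⟩
  have hlen : (0 :: vals).length = n + 1 := by simp [hn]
  have ht0 : t 0 = 0 := rfl
  have htget : ∀ j (h : j < n + 1), t j = (0 :: vals)[j]'(by omega) := by
    intro j h
    rw [htdef]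
    exact List.getD_eq_getElem _ _ (by omega)
  have htmono : ∀ j, j < n → t j ≤ t (j + 1) := by
    intro j hj
    rw [htget j (by omega), htget (j + 1) (by omega)]
    exact hsort.rel_get_of_lt (a := ⟨j, by omega⟩) (b := ⟨j + 1, by omega⟩) (by simp)
  have htpos : ∀ k, 1 ≤ k → k ≤ n → 0 < t k := by
    intro k h1 h2
    rw [htget k (by omega)]
    rcases k with _ | m
    · omega
    · exact hvpos _ (by simpa using List.getElem_mem (l := vals) (n := m) (by omega))
  have htval : ∀ v ∈ vals, ∃ k, 1 ≤ k ∧ k ≤ n ∧ t k = v := by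
    intro v hv
    obtain ⟨i, hi, hiv⟩ := List.mem_iff_getElem.mp hv
    exact ⟨i + 1, by omega, by omega, by rw [htget (i + 1) (by omega)]; simpa using hiv⟩
  have hlamval : ∀ Q ∈ 𝒢, 0 < lam Q → lam Q ∈ vals := by
    intro Q hQ h
    rw [hvals, Finset.mem_sort, Finset.mem_filter]
    exact ⟨Finset.mem_image_of_mem _ hQ, h⟩
  -- level sets
  set H : ℝ → Finset ι := fun s => 𝒢.filter (fun Q => s ≤ lam Q) with hHdef
  set U : ℝ → Set α := fun s => ⋃ Q ∈ H s, T Q with hUdef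
  have hUmeas : ∀ s, MeasurableSet (U s) := fun s =>
    (H s).measurableSet_biUnion fun Q _ => hTm Q
  have hUmem : ∀ s x, x ∈ U s ↔ ∃ Q ∈ H s, x ∈ T Q := by
    intro s x; rw [hUdef]; simp
  -- maximal cubes
  set 𝒯 : ℝ → Finset (Set α) := fun s => (H s).image T with h𝒯def
  set ℳ : ℝ → Finset (Set α) := fun s =>
    (𝒯 s).filter (fun B => ∀ C ∈ 𝒯 s, B ⊆ C → B = C) with hℳdef
  have key1 : ∀ s, ∀ B ∈ 𝒯 s, ∃ M ∈ ℳ s, B ⊆ M := by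
    intro s B hB
    set F : Finset (Set α) := (𝒯 s).filter (fun C => B ⊆ C) with hF
    have hne : F.Nonempty := ⟨B, Finset.mem_filter.mpr ⟨hB, subset_rfl⟩⟩
    obtain ⟨M, hMF, hmax⟩ := F.exists_maximal hne
    obtain ⟨hM𝒯, hBM⟩ := Finset.mem_filter.mp hMF
    refine ⟨M, Finset.mem_filter.mpr ⟨hM𝒯, ?_⟩, hBM⟩
    intro C hC hMC
    have hCF : C ∈ F := Finset.mem_filter.mpr ⟨hC, hBM.trans hMC⟩
    by_contra hne'
    exact hne' (le_antisymm hMC (hmax hCF hMC))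
  have key2 : ∀ s, ∀ M ∈ ℳ s, ∀ M' ∈ ℳ s, M ≠ M' → Disjoint M M' := by
    intro s M hM M' hM' hne
    obtain ⟨hM𝒯, hMmax⟩ := Finset.mem_filter.mp hM
    obtain ⟨hM'𝒯, hM'max⟩ := Finset.mem_filter.mp hM'
    obtain ⟨Q, _, rfl⟩ := Finset.mem_image.mp hM𝒯
    obtain ⟨Q', _, rfl⟩ := Finset.mem_image.mp hM'𝒯
    rcases hlat Q Q' with h | h | h
    · exact absurd (hMmax _ hM'𝒯 h) hne
    · exact absurd (hM'max _ hM𝒯 h).symm hne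
    · exact h
  have key3 : ∀ s, U s = ⋃ M ∈ ℳ s, (M : Set α) := by
    intro s
    apply Set.Subset.antisymm
    · intro x hx
      obtain ⟨Q, hQ, hxQ⟩ := (hUmem s x).mp hx
      obtain ⟨M, hM, hsub⟩ := key1 s (T Q) (Finset.mem_image_of_mem _ hQ)
      exact Set.mem_biUnion hM (hsub hxQ)
    · intro x hx
      obtain ⟨M, hM, hxM⟩ := Set.mem_iUnion₂.mp hx
      obtain ⟨Q, hQ, rfl⟩ := Finset.mem_image.mp (Finset.mem_filter.mp hM).1
      exact (hUmem s x).mpr ⟨Q, hQ, hxM⟩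
  have key4 : ∀ s, (μ (U s)).toReal = ∑ M ∈ ℳ s, (μ M).toReal := by
    intro s
    rw [key3 s, measure_biUnion_finset ?_ (fun M hM => ?_), ENNReal.toReal_sum
      (fun M _ => measure_ne_top μ M)]
    · intro M hM M' hM' hne
      exact key2 s M hM M' hM' hne
    · obtain ⟨Q, _, rfl⟩ := Finset.mem_image.mp (Finset.mem_filter.mp hM).1
      exact hTm Q
  have hMrep : ∀ s, ∀ M ∈ ℳ s, ∃ Q₀ ∈ H s, T Q₀ = M := by
    intro s M hM
    exact Finset.mem_image.mp (Finset.mem_filter.mp hM).1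
  -- Claim A : packing at each level
  have claimA : ∀ s, 0 < s → ∑ Q ∈ H s, w Q ≤ A * (μ (U s)).toReal := by
    intro s hs
    have step1 : ∑ Q ∈ H s, w Q
        ≤ ∑ M ∈ ℳ s, ∑ Q ∈ (H s).filter (fun Q => T Q ⊆ M), w Q := by
      have : ∑ Q ∈ H s, w Q
          ≤ ∑ Q ∈ H s, ∑ M ∈ ℳ s, (if T Q ⊆ M then w Q else 0) := by
        refine Finset.sum_le_sum fun Q hQ => ?_
        obtain ⟨M₀, hM₀, hsub⟩ := key1 s (T Q) (Finset.mem_image_of_mem _ hQ)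
        have := Finset.single_le_sum (f := fun M => if T Q ⊆ M then w Q else 0)
          (fun M _ => by by_cases h : T Q ⊆ M <;> simp [h, hw Q]) hM₀
        simpa [if_pos hsub] using this
      refine this.trans ?_
      rw [Finset.sum_comm]
      refine le_of_eq (Finset.sum_congr rfl fun M _ => ?_)
      simp [Finset.sum_filter]
    have step2 : ∀ M ∈ ℳ s, ∑ Q ∈ (H s).filter (fun Q => T Q ⊆ M), w Q
        ≤ A * (μ M).toReal := by
      intro M hM
      obtain ⟨Q₀, hQ₀, rfl⟩ := hMrep s M hM
      refine le_trans ?_ (hpack Q₀ (Finset.mem_filter.mp hQ₀).1)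
      refine Finset.sum_le_sum_of_subset_of_nonneg ?_ (fun Q _ _ => hw Q)
      intro Q hQ
      obtain ⟨hQH, hQsub⟩ := Finset.mem_filter.mp hQ
      exact Finset.mem_filter.mpr ⟨(Finset.mem_filter.mp hQH).1, hQsub⟩
    calc ∑ Q ∈ H s, w Q ≤ ∑ M ∈ ℳ s, ∑ Q ∈ (H s).filter (fun Q => T Q ⊆ M), w Q := step1
      _ ≤ ∑ M ∈ ℳ s, A * (μ M).toReal := Finset.sum_le_sum step2
      _ = A * (μ (U s)).toReal := by rw [key4, Finset.mul_sum]
  -- weak (1,1) at each level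
  have claimW : ∀ s, 0 < s → s * (μ (U s)).toReal ≤ ∫ x in U s, g x ∂μ := by
    intro s hs
    have hint : ∫ x in U s, g x ∂μ = ∑ M ∈ ℳ s, ∫ x in M, g x ∂μ := by
      rw [key3 s]
      refine integral_biUnion_finset _ (fun M hM => ?_) (fun M hM M' hM' hne => key2 s M hM M' hM' hne)
        (fun M _ => hgi.integrableOn)
      obtain ⟨Q, _, rfl⟩ := hMrep s M hM
      exact hTm Q
    rw [hint, key4, Finset.mul_sum]
    refine Finset.sum_le_sum fun M hM => ?_
    obtain ⟨Q₀, hQ₀, rfl⟩ := hMrep s M hM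
    have hsl : s ≤ lam Q₀ := (Finset.mem_filter.mp hQ₀).2
    have hm0 : 0 < (μ (T Q₀)).toReal := by
      rcases (ENNReal.toReal_nonneg (a := μ (T Q₀))).lt_or_eq with h | h
      · exact h
      · exfalso
        rw [hlamdef] at hsl
        simp only [← h, div_zero] at hsl
        linarith
    rw [hlamdef] at hsl
    calc s * (μ (T Q₀)).toReal ≤ ((∫ x in T Q₀, g x ∂μ) / (μ (T Q₀)).toReal) * (μ (T Q₀)).toReal :=
          mul_le_mul_of_nonneg_right hsl ENNReal.toReal_nonneg
      _ = ∫ x in T Q₀, g x ∂μ := div_mul_cancel₀ _ (ne_of_gt hm0)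
  -- maximal function
  set Mr : α → ℝ := fun x =>
    ((𝒢.sup fun Q => if x ∈ T Q then Real.toNNReal (lam Q) else 0 : NNReal) : ℝ) with hMrdef
  have hMr0 : ∀ x, 0 ≤ Mr x := fun x => NNReal.coe_nonneg _
  have hMlevel : ∀ s, 0 < s → ∀ x, s ≤ Mr x ↔ x ∈ U s := by
    intro s hs x
    constructor
    · intro h
      have h' : s.toNNReal ≤ 𝒢.sup fun Q => if x ∈ T Q then Real.toNNReal (lam Q) else 0 :=
        Real.toNNReal_le_iff_le_coe.mpr h
      obtain ⟨Q, hQ, hQle⟩ := (Finset.le_sup_iff (by simpa using hs)).mp h'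
      by_cases hx : x ∈ T Q
      · rw [if_pos hx] at hQle
        have hsl : s ≤ lam Q := by
          have := Real.toNNReal_le_iff_le_coe.mp hQle
          rwa [Real.coe_toNNReal _ (hlam0 Q)] at this
        exact (hUmem s x).mpr ⟨Q, Finset.mem_filter.mpr ⟨hQ, hsl⟩, hx⟩
      · rw [if_neg hx] at hQle
        exact absurd hQle (by simpa using hs)
    · intro hx
      obtain ⟨Q, hQ, hxQ⟩ := (hUmem s x).mp hx
      obtain ⟨hQ𝒢, hsl⟩ := Finset.mem_filter.mp hQ
      have h1 : (Real.toNNReal (lam Q) : ℝ) ≤ Mr x := by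
        rw [hMrdef]
        refine NNReal.coe_le_coe.mpr ?_
        have := Finset.le_sup (f := fun Q => if x ∈ T Q then Real.toNNReal (lam Q) else 0) hQ𝒢
        simpa only [if_pos hxQ] using this
      rw [Real.coe_toNNReal _ (hlam0 Q)] at h1
      linarith
  have hMval : ∀ x, Mr x = 0 ∨ ∃ Q ∈ 𝒢, Mr x = lam Q ∧ 0 < lam Q := by
    intro x
    by_cases h : Mr x = 0
    · exact Or.inl h
    right
    have hne : 𝒢.Nonempty := by
      by_contra hemp
      rw [Finset.not_nonempty_iff_eq_empty] at hemp
      rw [hMrdef] at h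
      simp [hemp] at h
    obtain ⟨Q, hQ, hsup⟩ := Finset.exists_mem_eq_sup 𝒢 hne
      (fun Q => if x ∈ T Q then Real.toNNReal (lam Q) else 0)
    by_cases hx : x ∈ T Q
    · rw [if_pos hx] at hsup
      have hMeq : Mr x = lam Q := by
        rw [hMrdef]; simp only [hsup]
        exact Real.coe_toNNReal _ (hlam0 Q)
      refine ⟨Q, hQ, hMeq, ?_⟩
      rcases (hlam0 Q).lt_or_eq with h' | h'
      · exact h'
      · exact absurd (by rw [hMeq, ← h']) h
    · rw [if_neg hx] at hsup
      exact absurd (by rw [hMrdef]; simp [hsup]) h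
  -- telescoping identities
  have hsq0 : (fun v : ℝ => v ^ 2) 0 = 0 := by norm_num
  have hid0 : (fun v : ℝ => v) 0 = 0 := rfl
  have hxM : ∀ x, Mr x = 0 ∨ ∃ k, 1 ≤ k ∧ k ≤ n ∧ t k = Mr x := by
    intro x
    rcases hMval x with h | ⟨Q, hQ, hMeq, hpos⟩
    · exact Or.inl h
    · right
      obtain ⟨k, h1, h2, h3⟩ := htval (lam Q) (hlamval Q hQ hpos)
      exact ⟨k, h1, h2, by rw [h3, hMeq]⟩
  have idM2 : ∀ x, Mr x ^ 2
      = ∑ j ∈ Finset.range n, Set.indicator (U (t (j + 1))) (fun _ => t (j + 1) ^ 2 - t j ^ 2) x := by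
    intro x
    rw [← tele_aux (fun v => v ^ 2) hsq0 n t htmono ht0 (Mr x) (hxM x) (hMr0 x)]
    refine Finset.sum_congr rfl fun j hj => ?_
    have hjn : j < n := Finset.mem_range.mp hj
    rw [Set.indicator_apply]
    exact if_congr (hMlevel (t (j + 1)) (htpos (j + 1) (by omega) (by omega)) x) rfl rfl
  have idgM : ∀ x, g x * Mr x
      = ∑ j ∈ Finset.range n, Set.indicator (U (t (j + 1))) g x * (t (j + 1) - t j) := by
    intro x
    have := tele_aux (fun v => v) hid0 n t htmono ht0 (Mr x) (hxM x) (hMr0 x)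
    calc g x * Mr x = g x * ∑ j ∈ Finset.range n,
          (if t (j + 1) ≤ Mr x then t (j + 1) - t j else 0) := by rw [this]
      _ = ∑ j ∈ Finset.range n, Set.indicator (U (t (j + 1))) g x * (t (j + 1) - t j) := by
          rw [Finset.mul_sum]
          refine Finset.sum_congr rfl fun j hj => ?_
          have hjn : j < n := Finset.mem_range.mp hj
          rw [Set.indicator_apply]
          rw [if_congr (hMlevel (t (j + 1)) (htpos (j + 1) (by omega) (by omega)) x) rfl rfl]
          split_ifs <;> ring
  -- the two integral quantities
  set I2 : ℝ := ∑ j ∈ Finset.range n, (t (j + 1) ^ 2 - t j ^ 2) * (μ (U (t (j + 1)))).toReal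
    with hI2def
  set I1 : ℝ := ∑ j ∈ Finset.range n, (t (j + 1) - t j) * ∫ x in U (t (j + 1)), g x ∂μ
    with hI1def
  have ht_nonneg : ∀ j, j ≤ n → 0 ≤ t j := by
    intro j hj
    rcases Nat.eq_zero_or_pos j with rfl | h
    · rw [ht0]
    · exact (htpos j h hj).le
  have hP2nn : ∀ j, j < n → 0 ≤ t (j + 1) ^ 2 - t j ^ 2 := by
    intro j hj
    have h1 := htmono j hj
    have h2 := ht_nonneg j (by omega)
    nlinarith
  have hMr2int : Integrable (fun x => Mr x ^ 2) μ := by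
    simp only [idM2]
    exact integrable_finset_sum _ fun j _ => (integrable_const _).indicator (hUmeas _)
  have hgMint : Integrable (fun x => g x * Mr x) μ := by
    simp only [idgM]
    exact integrable_finset_sum _ fun j _ => (hgi.indicator (hUmeas _)).mul_const _
  have hIM2 : ∫ x, Mr x ^ 2 ∂μ = I2 := by
    simp only [idM2]
    rw [integral_finset_sum _ fun j _ => (integrable_const _).indicator (hUmeas _)]
    refine Finset.sum_congr rfl fun j _ => ?_
    rw [integral_indicator_const _ (hUmeas _), smul_eq_mul, mul_comm]; rfl
  have hIgM : ∫ x, g x * Mr x ∂μ = I1 := by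
    simp only [idgM]
    rw [integral_finset_sum _ fun j _ => (hgi.indicator (hUmeas _)).mul_const _]
    refine Finset.sum_congr rfl fun j _ => ?_
    rw [integral_mul_const, integral_indicator (hUmeas _), mul_comm]
  -- chain 1 : LHS ≤ A * I2
  have chain1 : ∑ Q ∈ 𝒢, w Q * lam Q ^ 2 ≤ A * I2 := by
    have expand : ∑ Q ∈ 𝒢, w Q * lam Q ^ 2
        = ∑ j ∈ Finset.range n, (t (j + 1) ^ 2 - t j ^ 2) * ∑ Q ∈ H (t (j + 1)), w Q := by
      have hQid : ∀ Q ∈ 𝒢, w Q * lam Q ^ 2 = ∑ j ∈ Finset.range n,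
          (if t (j + 1) ≤ lam Q then w Q * (t (j + 1) ^ 2 - t j ^ 2) else 0) := by
        intro Q hQ
        have hx : lam Q = 0 ∨ ∃ k, 1 ≤ k ∧ k ≤ n ∧ t k = lam Q := by
          rcases (hlam0 Q).lt_or_eq with h | h
          · exact Or.inr (htval _ (hlamval Q hQ h))
          · exact Or.inl h.symm
        rw [← tele_aux (fun v => v ^ 2) hsq0 n t htmono ht0 (lam Q) hx (hlam0 Q),
          Finset.mul_sum]
        refine Finset.sum_congr rfl fun j _ => ?_
        rw [mul_ite, mul_zero]
      rw [Finset.sum_congr rfl hQid, Finset.sum_comm]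
      refine Finset.sum_congr rfl fun j _ => ?_
      rw [hHdef]
      simp only [Finset.sum_filter]
      rw [Finset.mul_sum]
      refine Finset.sum_congr rfl fun Q _ => ?_
      split_ifs <;> ring
    rw [expand, hI2def, Finset.mul_sum]
    refine Finset.sum_le_sum fun j hj => ?_
    have hjn : j < n := Finset.mem_range.mp hj
    have hA2 := claimA (t (j + 1)) (htpos (j + 1) (by omega) (by omega))
    calc (t (j + 1) ^ 2 - t j ^ 2) * ∑ Q ∈ H (t (j + 1)), w Q
        ≤ (t (j + 1) ^ 2 - t j ^ 2) * (A * (μ (U (t (j + 1)))).toReal) :=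
          mul_le_mul_of_nonneg_left hA2 (hP2nn j hjn)
      _ = A * ((t (j + 1) ^ 2 - t j ^ 2) * (μ (U (t (j + 1)))).toReal) := by ring
  -- chain 2 : I2 ≤ 2 * I1
  have chain2 : I2 ≤ 2 * I1 := by
    rw [hI2def, hI1def, Finset.mul_sum]
    refine Finset.sum_le_sum fun j hj => ?_
    have hjn : j < n := Finset.mem_range.mp hj
    have hpos := htpos (j + 1) (by omega) (by omega)
    have hW := claimW (t (j + 1)) hpos
    have hmono := htmono j hjn
    have h0 := ht_nonneg j (by omega)
    have hμnn : (0:ℝ) ≤ (μ (U (t (j + 1)))).toReal := ENNReal.toReal_nonneg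
    nlinarith [mul_nonneg (sub_nonneg.mpr hmono) (sub_nonneg.mpr hW),
      mul_nonneg (mul_nonneg (sub_nonneg.mpr hmono) (sub_nonneg.mpr hmono)) hμnn]
  -- chain 3 : I1 ≤ ∫ g² + I2 / 4
  have chain3 : I1 ≤ (∫ x, g x ^ 2 ∂μ) + I2 / 4 := by
    rw [← hIgM, ← hIM2]
    have hptw : ∀ x, g x * Mr x ≤ g x ^ 2 + Mr x ^ 2 / 4 := by
      intro x
      nlinarith [sq_nonneg (g x - Mr x / 2)]
    calc ∫ x, g x * Mr x ∂μ ≤ ∫ x, (g x ^ 2 + Mr x ^ 2 / 4) ∂μ :=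
          integral_mono hgMint (hg2.add (hMr2int.div_const 4)) hptw
      _ = (∫ x, g x ^ 2 ∂μ) + (∫ x, Mr x ^ 2 ∂μ) / 4 := by
          rw [integral_add hg2 (hMr2int.div_const 4), integral_div]
  -- conclusion
  have hg2nn : 0 ≤ ∫ x, g x ^ 2 ∂μ := integral_nonneg fun x => sq_nonneg _
  have hI2le : I2 ≤ 4 * ∫ x, g x ^ 2 ∂μ := by linarith
  calc ∑ Q ∈ 𝒢, w Q * ((∫ x in T Q, g x ∂μ) / (μ (T Q)).toReal) ^ 2
      = ∑ Q ∈ 𝒢, w Q * lam Q ^ 2 := rfl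
    _ ≤ A * I2 := chain1
    _ ≤ A * (4 * ∫ x, g x ^ 2 ∂μ) := mul_le_mul_of_nonneg_left hI2le hA
    _ = 4 * A * ∫ x, g x ^ 2 ∂μ := by ring


open scoped Classical in
/-- boundedness of the paraproduct.  In a dyadic lattice (cubes `S Q`,
nested or disjoint, father map `Fa`), let `Db Q = Δ_Q b` be the pairwise orthogonal
martingale differences of `b` over a subfamily `𝒢` of good cubes, satisfying the
Carleson condition `Σ_{Q ∈ 𝒢, Q ⊆ R} ‖Δ_Q b‖² ≤ A·μ(R)` for every dyadic cube `R`.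
Then the paraproduct `π_b f = Σ_{Q ∈ 𝒢} ⟨f⟩_{F^{(r-1)}(Q),μ} Δ_Q b` satisfies
`‖π_b f‖_{L²(μ)} ≤ 2√A‖f‖_{L²(μ)}`, i.e. `‖π_b f‖² ≤ 4A‖f‖²`. -/
theorem paraproduct_bounded {α ι : Type*} [MeasurableSpace α]
    (μ : Measure α) [IsFiniteMeasure μ]
    (S : ι → Set α) (hSm : ∀ Q, MeasurableSet (S Q))
    (hlat : ∀ Q R, S Q ⊆ S R ∨ S R ⊆ S Q ∨ Disjoint (S Q) (S R))
    (Fa : ι → ι) (hFa : ∀ Q, S Q ⊆ S (Fa Q))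
    (r : ℕ) (hr : 1 ≤ r)
    (𝒢 : Finset ι) (A : ℝ) (hA : 0 ≤ A)
    (Db : ι → α → ℝ) (hDm : ∀ Q, Measurable (Db Q)) (hD2 : ∀ Q, MemLp (Db Q) 2 μ)
    (horth : ∀ Q ∈ 𝒢, ∀ Q' ∈ 𝒢, Q ≠ Q' → ∫ x, Db Q x * Db Q' x ∂μ = 0)
    (hCarl : ∀ R : ι,
      ∑ Q ∈ 𝒢.filter (fun Q => S Q ⊆ S R), ∫ x, (Db Q x) ^ 2 ∂μ
        ≤ A * (μ (S R)).toReal)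
    (f : α → ℝ) (hfm : Measurable f) (hf : MemLp f 2 μ) :
    ∫ x, (∑ Q ∈ 𝒢,
        ((∫ y in S (Fa^[r - 1] Q), f y ∂μ) / (μ (S (Fa^[r - 1] Q))).toReal)
          * Db Q x) ^ 2 ∂μ
      ≤ 4 * A * ∫ x, (f x) ^ 2 ∂μ := by
  classical
  set T : ι → Set α := fun Q => S (Fa^[r - 1] Q) with hTdef
  have hTm : ∀ Q, MeasurableSet (T Q) := fun Q => hSm _
  have hlatT : ∀ Q R, T Q ⊆ T R ∨ T R ⊆ T Q ∨ Disjoint (T Q) (T R) := fun Q R => hlat _ _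
  have hsubiter : ∀ (k : ℕ) (Q : ι), S Q ⊆ S (Fa^[k] Q) := by
    intro k
    induction k with
    | zero => intro Q; simp
    | succ m ih =>
      intro Q
      rw [Function.iterate_succ_apply']
      exact (ih Q).trans (hFa _)
  set w : ι → ℝ := fun Q => ∫ x, Db Q x ^ 2 ∂μ with hwdef
  have hw : ∀ Q, 0 ≤ w Q := fun Q => integral_nonneg fun x => sq_nonneg _
  have hpack : ∀ Q₀ ∈ 𝒢, ∑ Q ∈ 𝒢.filter (fun Q => T Q ⊆ T Q₀), w Q
      ≤ A * (μ (T Q₀)).toReal := by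
    intro Q₀ hQ₀
    refine le_trans (Finset.sum_le_sum_of_subset_of_nonneg ?_ fun Q _ _ => hw Q)
      (hCarl (Fa^[r - 1] Q₀))
    intro Q hQ
    obtain ⟨hQ𝒢, hsub⟩ := Finset.mem_filter.mp hQ
    exact Finset.mem_filter.mpr ⟨hQ𝒢, (hsubiter (r - 1) Q).trans hsub⟩
  set g : α → ℝ := fun x => |f x| with hgdef
  have hg0 : ∀ x, 0 ≤ g x := fun x => abs_nonneg _
  have hgi : Integrable g μ := (hf.integrable one_le_two).abs
  have hg2eq : (fun x => g x ^ 2) = fun x => f x ^ 2 := funext fun x => sq_abs _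
  have hg2 : Integrable (fun x => g x ^ 2) μ := by rw [hg2eq]; exact hf.integrable_sq
  set c : ι → ℝ := fun Q => (∫ y in T Q, f y ∂μ) / (μ (T Q)).toReal with hcdef
  have hmul : ∀ Q Q' : ι, Integrable (fun x => (c Q * Db Q x) * (c Q' * Db Q' x)) μ :=
    fun Q Q' => l2_mul_integrable ((hD2 Q).const_mul (c Q)) ((hD2 Q').const_mul (c Q'))
  have hexp : ∫ x, (∑ Q ∈ 𝒢, c Q * Db Q x) ^ 2 ∂μ = ∑ Q ∈ 𝒢, c Q ^ 2 * w Q := by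
    have e1 : ∀ x : α, (∑ Q ∈ 𝒢, c Q * Db Q x) ^ 2
        = ∑ Q ∈ 𝒢, ∑ Q' ∈ 𝒢, (c Q * Db Q x) * (c Q' * Db Q' x) := by
      intro x; rw [sq, Finset.sum_mul_sum]
    simp only [e1]
    rw [integral_finset_sum _ fun Q _ => integrable_finset_sum _ fun Q' _ => hmul Q Q']
    refine Finset.sum_congr rfl fun Q hQ => ?_
    rw [integral_finset_sum _ fun Q' _ => hmul Q Q']
    rw [Finset.sum_eq_single_of_mem Q hQ ?_]
    · have e2 : (fun x => (c Q * Db Q x) * (c Q * Db Q x)) = fun x => c Q ^ 2 * Db Q x ^ 2 := by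
        funext x; ring
      rw [e2, integral_const_mul]
    · intro Q' hQ' hne
      have e3 : (fun x => (c Q * Db Q x) * (c Q' * Db Q' x))
          = fun x => (c Q * c Q') * (Db Q x * Db Q' x) := by funext x; ring
      rw [e3, integral_const_mul, horth Q hQ Q' hQ' (Ne.symm hne), mul_zero]
  have hcomp : ∀ Q ∈ 𝒢, c Q ^ 2 * w Q
      ≤ w Q * ((∫ x in T Q, g x ∂μ) / (μ (T Q)).toReal) ^ 2 := by
    intro Q hQ
    have habs : |c Q| ≤ (∫ x in T Q, g x ∂μ) / (μ (T Q)).toReal := by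
      have habs' : |∫ y in T Q, f y ∂μ| ≤ ∫ x in T Q, g x ∂μ := by
        have := norm_integral_le_integral_norm (μ := μ.restrict (T Q)) f
        simpa [Real.norm_eq_abs, hgdef] using this
      rw [hcdef]
      rcases (ENNReal.toReal_nonneg (a := μ (T Q))).lt_or_eq with h | h
      · rw [abs_div, abs_of_nonneg ENNReal.toReal_nonneg]
        exact (div_le_div_iff_of_pos_right h).mpr habs'
      · simp [← h]
    calc c Q ^ 2 * w Q = w Q * |c Q| ^ 2 := by rw [sq_abs]; ring
      _ ≤ w Q * ((∫ x in T Q, g x ∂μ) / (μ (T Q)).toReal) ^ 2 :=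
        mul_le_mul_of_nonneg_left (pow_le_pow_left₀ (abs_nonneg _) habs 2) (hw Q)
  calc ∫ x, (∑ Q ∈ 𝒢,
        ((∫ y in S (Fa^[r - 1] Q), f y ∂μ) / (μ (S (Fa^[r - 1] Q))).toReal)
          * Db Q x) ^ 2 ∂μ
      = ∑ Q ∈ 𝒢, c Q ^ 2 * w Q := hexp
    _ ≤ ∑ Q ∈ 𝒢, w Q * ((∫ x in T Q, g x ∂μ) / (μ (T Q)).toReal) ^ 2 :=
        Finset.sum_le_sum hcomp
    _ ≤ 4 * A * ∫ x, g x ^ 2 ∂μ :=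
        carleson_embed μ T hTm hlatT 𝒢 A hA w hw hpack g hg0 hgi hg2
    _ = 4 * A * ∫ x, f x ^ 2 ∂μ := by rw [hg2eq]
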